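/- arXiv:1907.00742 — 3 statements merged into one kernel-verified Lean document; each statement's English description precedes it below -/
import Mathlib

section
/- Suppose that every game of length ω³ on ℕ with open payoff (i.e., payoff A ⊆ ((ℕ×ℕ×ℕ) → ℕ) open in the product topology) is determined. Then every game of length ω² on ℕ whose payoff belongs to ⅁ℝ_{ω²}Σ⁰₁ (as a subset of the space (ℕ×ℕ) → ℕ with the product topology) is determined. -/
noncomputable section

/-- The Baire space `ℕ → ℕ`, denoted ℝ in the paper. -/
abbrev Baire : Type := ℕ → ℕ

/-- The finite sequence `(x 0, …, x (m-1))`. -/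
def resSeq {α : Type*} (x : ℕ → α) (m : ℕ) : List α := List.ofFn fun i : Fin m => x i

/-- `σ` is a winning strategy for Player I in the length-ω game on `X` with payoff `A`. -/
def WinStratI {X : Type*} (A : Set (ℕ → X)) (σ : List X → X) : Prop :=
  ∀ x : ℕ → X, (∀ n, x (2 * n) = σ (resSeq x (2 * n))) → x ∈ A

/-- `τ` is a winning strategy for Player II in the length-ω game on `X` with payoff `A`. -/
def WinStratII {X : Type*} (A : Set (ℕ → X)) (τ : List X → X) : Prop :=
  ∀ x : ℕ → X, (∀ n, x (2 * n + 1) = τ (resSeq x (2 * n + 1))) → x ∉ A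

/-- The length-ω game on `X` with payoff `A` is determined. -/
def DeterminedOmega {X : Type*} (A : Set (ℕ → X)) : Prop :=
  (∃ σ, WinStratI A σ) ∨ (∃ τ, WinStratII A τ)

/-- Lexicographic order on ℕ × ℕ. -/
def lex2 (p q : ℕ × ℕ) : Prop := p.1 < q.1 ∨ (p.1 = q.1 ∧ p.2 < q.2)

/-- A strategy in a game of length ω²: it assigns a move to each position, as a
function of the partial play on the lexicographic initial segment below the position. -/
abbrev Strat2 (X : Type*) := ∀ p : ℕ × ℕ, ({q : ℕ × ℕ // lex2 q p} → X) → X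

/-- `σ` is winning for Player I (who moves at `(m,n)` for `n` even) in the game of
length ω² on `X` with payoff `A`. -/
def WinStrat2I {X : Type*} (A : Set ((ℕ × ℕ) → X)) (σ : Strat2 X) : Prop :=
  ∀ x : (ℕ × ℕ) → X, (∀ p : ℕ × ℕ, Even p.2 → x p = σ p fun q => x q.1) → x ∈ A

/-- `τ` is winning for Player II (who moves at `(m,n)` for `n` odd) in the game of
length ω² on `X` with payoff `A`. -/
def WinStrat2II {X : Type*} (A : Set ((ℕ × ℕ) → X)) (τ : Strat2 X) : Prop :=
  ∀ x : (ℕ × ℕ) → X, (∀ p : ℕ × ℕ, Odd p.2 → x p = τ p fun q => x q.1) → x ∉ A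

/-- The game of length ω² on `X` with payoff `A` is determined. -/
def Determined2 {X : Type*} (A : Set ((ℕ × ℕ) → X)) : Prop :=
  (∃ σ, WinStrat2I A σ) ∨ (∃ τ, WinStrat2II A τ)

/-- Lexicographic order on ℕ × ℕ × ℕ. -/
def lex3 (p q : ℕ × ℕ × ℕ) : Prop := p.1 < q.1 ∨ (p.1 = q.1 ∧ lex2 p.2 q.2)

/-- A strategy in a game of length ω³. -/
abbrev Strat3 (X : Type*) := ∀ p : ℕ × ℕ × ℕ, ({q : ℕ × ℕ × ℕ // lex3 q p} → X) → X

/-- `σ` is winning for Player I (who moves at `(k,m,n)` for `n` even) in the game of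
length ω³ on `X` with payoff `A`. -/
def WinStrat3I {X : Type*} (A : Set ((ℕ × ℕ × ℕ) → X)) (σ : Strat3 X) : Prop :=
  ∀ x : (ℕ × ℕ × ℕ) → X, (∀ p : ℕ × ℕ × ℕ, Even p.2.2 → x p = σ p fun q => x q.1) → x ∈ A

/-- `τ` is winning for Player II in the game of length ω³ on `X` with payoff `A`. -/
def WinStrat3II {X : Type*} (A : Set ((ℕ × ℕ × ℕ) → X)) (τ : Strat3 X) : Prop :=
  ∀ x : (ℕ × ℕ × ℕ) → X, (∀ p : ℕ × ℕ × ℕ, Odd p.2.2 → x p = τ p fun q => x q.1) → x ∉ A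

/-- The game of length ω³ on `X` with payoff `A` is determined. -/
def Determined3 {X : Type*} (A : Set ((ℕ × ℕ × ℕ) → X)) : Prop :=
  (∃ σ, WinStrat3I A σ) ∨ (∃ τ, WinStrat3II A τ)

/-- `A ∈ ⅁ℝ_{ω²}`: Player I has a winning strategy in the game of length ω² on ℝ
(the Baire space) with payoff `A`. -/
def GameR2I (A : Set ((ℕ × ℕ) → Baire)) : Prop := ∃ σ : Strat2 Baire, WinStrat2I A σ

/-- `C ∈ ⅁ℝ_{ω²}Σ⁰₁` as a subset of the topological space `Z`. -/
def InGameR2Sigma01 {Z : Type*} [TopologicalSpace Z] (C : Set Z) : Prop :=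
  ∃ B : Set (Z × ((ℕ × ℕ) → Baire)), IsOpen B ∧ C = {z | GameR2I {y | (z, y) ∈ B}}




theorem lex2_wf : WellFounded lex2 := by
  have h2 : WellFounded (Prod.Lex (· < · : ℕ→ℕ→Prop) (· < ·)) :=
    (Nat.lt_wfRel.wf).prod_lex (Nat.lt_wfRel.wf)
  refine Subrelation.wf ?_ h2
  rintro ⟨a,b⟩ ⟨c,d⟩ (h | ⟨rfl, h⟩)
  · exact Prod.Lex.left _ _ h
  · exact Prod.Lex.right _ h

theorem lex3_wf : WellFounded lex3 := by
  have h2 : WellFounded (Prod.Lex (· < · : ℕ→ℕ→Prop) (· < ·)) :=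
    (Nat.lt_wfRel.wf).prod_lex (Nat.lt_wfRel.wf)
  have h3 := (Nat.lt_wfRel.wf).prod_lex h2
  refine Subrelation.wf ?_ h3
  rintro ⟨a,b,c⟩ ⟨d,e,f⟩ (h | ⟨rfl, h | ⟨rfl, h⟩⟩)
  · exact Prod.Lex.left _ _ h
  · exact Prod.Lex.right _ (Prod.Lex.left _ _ h)
  · exact Prod.Lex.right _ (Prod.Lex.right _ h)

/-- Play with `e` moving at even third coordinates and `o` at odd ones. -/
def playAux (e o : Strat3 ℕ) : (ℕ × ℕ × ℕ) → ℕ :=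
  lex3_wf.fix fun p ih =>
    if Even p.2.2 then e p (fun q => ih q.1 q.2) else o p (fun q => ih q.1 q.2)

theorem playAux_eq (e o : Strat3 ℕ) (p : ℕ × ℕ × ℕ) :
    playAux e o p =
      if Even p.2.2 then e p (fun q => playAux e o q.1)
      else o p (fun q => playAux e o q.1) :=
  lex3_wf.fix_eq _ p

theorem playAux_even (e o : Strat3 ℕ) (p : ℕ × ℕ × ℕ) (hp : Even p.2.2) :
    playAux e o p = e p (fun q => playAux e o q.1) := by
  rw [playAux_eq, if_pos hp]

theorem playAux_odd (e o : Strat3 ℕ) (p : ℕ × ℕ × ℕ) (hp : Odd p.2.2) :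
    playAux e o p = o p (fun q => playAux e o q.1) := by
  rw [playAux_eq, if_neg (by simpa [Nat.not_even_iff_odd] using hp)]

def bitOf (b : ℕ) : ℕ := if Even b then 0 else 1

def decodeZ (x : (ℕ × ℕ × ℕ) → ℕ) : (ℕ × ℕ) → ℕ := fun p => x (0, p.1, p.2)
def decodeY (x : (ℕ × ℕ × ℕ) → ℕ) : (ℕ × ℕ) → Baire :=
  fun p j => x (p.1 + 1, p.2, 2 * j + bitOf p.2)

/-- Embed a length-ω³ strategy's block-0 behaviour as a length-ω² strategy. -/
def strat2of (s : Strat3 ℕ) : Strat2 ℕ := fun p h =>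
  s (0, p.1, p.2) fun q => h ⟨q.1.2, by
    rcases q.2 with h1 | ⟨h1, h2⟩
    · exact absurd h1 (Nat.not_lt_zero _)
    · exact h2⟩

/-- Opponent function for Player I's simulation (case I): odd-position moves. -/
def FI (z : (ℕ × ℕ) → ℕ) (y : (ℕ × ℕ) → Baire) : Strat3 ℕ := fun p _ =>
  if p.1 = 0 then z p.2
  else if Even p.2.1 then 0
  else y (p.1 - 1, p.2.1) ((p.2.2 - 1) / 2)

def yhist (p : ℕ × ℕ × ℕ) (hp : p.1 ≠ 0) (h : {q : ℕ × ℕ × ℕ // lex3 q p} → ℕ) :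
    {q : ℕ × ℕ // lex2 q (p.1 - 1, p.2.1)} → Baire := fun q j =>
  h ⟨(q.1.1 + 1, q.1.2, 2 * j + bitOf q.1.2), by
    rcases q.2 with h1 | ⟨h1, h2⟩
    · left; simp only at h1 ⊢; omega
    · right
      refine ⟨by simp only at h1 ⊢; omega, Or.inl h2⟩⟩

/-- Even-position move function for Player II's simulation (case II). -/
def GII (z : (ℕ × ℕ) → ℕ) (σR : Strat2 Baire) : Strat3 ℕ := fun p h =>
  if hp : p.1 = 0 then z p.2
  else if Even p.2.1 then σR (p.1 - 1, p.2.1) (yhist p hp h) (p.2.2 / 2)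
  else 0


theorem lex2_trans {a b c : ℕ × ℕ} (h1 : lex2 a b) (h2 : lex2 b c) : lex2 a c := by
  unfold lex2 at *; omega

/-- Block 0 of the simulated play reproduces `z`. -/
theorem blockZero (e o : Strat3 ℕ) (z : (ℕ × ℕ) → ℕ)
    (he : (∀ p : ℕ × ℕ, Even p.2 → z p = strat2of e p fun q => z q.1) ∨
      (∀ (m n : ℕ) (h : {q // lex3 q (0, m, n)} → ℕ), Even n → e (0, m, n) h = z (m, n)))
    (ho : (∀ p : ℕ × ℕ, Odd p.2 → z p = strat2of o p fun q => z q.1) ∨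
      (∀ (m n : ℕ) (h : {q // lex3 q (0, m, n)} → ℕ), Odd n → o (0, m, n) h = z (m, n))) :
    ∀ p : ℕ × ℕ, playAux e o (0, p.1, p.2) = z p := by
  intro p
  induction p using lex2_wf.induction with
  | _ p IH =>
    have hsub : ∀ q : {q : ℕ × ℕ × ℕ // lex3 q (0, p.1, p.2)},
        playAux e o q.1 = z q.1.2 := by
      intro q
      rcases q.2 with h1 | ⟨h1, h2⟩
      · exact absurd h1 (Nat.not_lt_zero _)
      · have hq : q.1 = (0, q.1.2.1, q.1.2.2) := by
          ext <;> simp [h1]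
        rw [hq]
        exact IH q.1.2 h2
    rcases Nat.even_or_odd p.2 with hpar | hpar
    · rw [playAux_even e o (0, p.1, p.2) hpar]
      rcases he with he | he
      · rw [he p hpar]
        show e (0, p.1, p.2) _ = e (0, p.1, p.2) _
        congr 1
        funext q
        exact hsub q
      · exact he p.1 p.2 _ hpar
    · rw [playAux_odd e o (0, p.1, p.2) hpar]
      rcases ho with ho | ho
      · rw [ho p hpar]
        show o (0, p.1, p.2) _ = o (0, p.1, p.2) _
        congr 1
        funext q
        exact hsub q
      · exact ho p.1 p.2 _ hpar

/-- Positions whose value in the case-I simulation depends only on `y` below `P`. -/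
def good (P : ℕ × ℕ) (p : ℕ × ℕ × ℕ) : Prop :=
  p.1 = 0 ∨ (0 < p.1 ∧ (lex2 (p.1 - 1, p.2.1) P ∨ ((p.1 - 1, p.2.1) = P ∧ Even P.2)))

theorem good_mono {P : ℕ × ℕ} {p q : ℕ × ℕ × ℕ} (hp : good P p) (hq : lex3 q p) :
    good P q := by
  rcases Nat.eq_zero_or_pos q.1 with h0 | h0
  · exact Or.inl h0
  right
  refine ⟨h0, ?_⟩
  rcases hp with hp | ⟨hp1, hp2⟩
  · rcases hq with hq | ⟨hq, _⟩ <;> omega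
  have hblock : lex2 (q.1 - 1, q.2.1) (p.1 - 1, p.2.1) ∨
      (q.1 - 1 = p.1 - 1 ∧ q.2.1 = p.2.1) := by
    rcases hq with hq | ⟨hq, hq2 | ⟨hq2, _⟩⟩
    · left; left; simp only; omega
    · left; right; exact ⟨by simp only; omega, hq2⟩
    · right; exact ⟨by omega, hq2⟩
  rcases hblock with hb | ⟨hb1, hb2⟩
  · rcases hp2 with hp2 | ⟨hp2, _⟩
    · exact Or.inl (lex2_trans hb hp2)
    · exact Or.inl (hp2 ▸ hb)
  · have : (q.1 - 1, q.2.1) = (p.1 - 1, p.2.1) := by rw [hb1, hb2]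
    rcases hp2 with hp2 | ⟨hp2, hp3⟩
    · exact Or.inl (this ▸ hp2)
    · exact Or.inr ⟨this ▸ hp2, hp3⟩

theorem play_depend (e : Strat3 ℕ) (z : (ℕ × ℕ) → ℕ) (y y' : (ℕ × ℕ) → Baire)
    (P : ℕ × ℕ) (hag : ∀ q, lex2 q P → y q = y' q) :
    ∀ p, good P p → playAux e (FI z y) p = playAux e (FI z y') p := by
  intro p
  induction p using lex3_wf.induction with
  | _ p IH =>
    intro hp
    rcases Nat.even_or_odd p.2.2 with hpar | hpar
    · rw [playAux_even _ _ _ hpar, playAux_even _ _ _ hpar]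
      congr 1
      funext q
      exact IH q.1 q.2 (good_mono hp q.2)
    · rw [playAux_odd _ _ _ hpar, playAux_odd _ _ _ hpar]
      show FI z y p _ = FI z y' p _
      unfold FI
      rcases eq_or_ne p.1 0 with h0 | h0
      · rw [if_pos h0, if_pos h0]
      rw [if_neg h0, if_neg h0]
      rcases Nat.even_or_odd p.2.1 with hm | hm
      · rw [if_pos hm, if_pos hm]
      rw [if_neg (by simpa [Nat.not_even_iff_odd] using hm),
          if_neg (by simpa [Nat.not_even_iff_odd] using hm)]
      rcases hp with hp | ⟨_, hp2 | ⟨hp2, hp3⟩⟩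
      · omega
      · rw [hag _ hp2]
      · exfalso
        have : p.2.1 = P.2 := congrArg Prod.snd hp2
        rw [Nat.odd_iff, Nat.even_iff] at *
        omega


open Classical in
def extendAt (p : ℕ × ℕ) (hy : {q // lex2 q p} → Baire) : (ℕ × ℕ) → Baire :=
  fun q => if h : lex2 q p then hy ⟨q, h⟩ else fun _ => 0

theorem aux_main
    (h : ∀ A : Set ((ℕ × ℕ × ℕ) → ℕ), IsOpen A → Determined3 A) :
    ∀ C : Set ((ℕ × ℕ) → ℕ), InGameR2Sigma01 C → Determined2 C := by
  intro C hCmem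
  obtain ⟨B, hB, hC⟩ := hCmem
  have hdec : Continuous fun x : (ℕ × ℕ × ℕ) → ℕ =>
      ((decodeZ x, decodeY x) : ((ℕ × ℕ) → ℕ) × ((ℕ × ℕ) → Baire)) := by
    refine Continuous.prodMk ?_ ?_
    · exact continuous_pi fun p => continuous_apply (0, p.1, p.2)
    · exact continuous_pi fun p => continuous_pi fun j => continuous_apply _
  have hA : IsOpen ((fun x => (decodeZ x, decodeY x)) ⁻¹' B) := hB.preimage hdec
  rcases h _ hA with ⟨σ3, hσ3⟩ | ⟨τ3, hτ3⟩
  · -- Player I wins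
    left
    refine ⟨strat2of σ3, ?_⟩
    intro z hz
    simp only [hC, Set.mem_setOf_eq]
    refine ⟨fun p hy j => playAux σ3 (FI z (extendAt p hy)) (p.1 + 1, p.2, 2 * j), ?_⟩
    intro y hy
    set x := playAux σ3 (FI z y) with hx
    have hcons : ∀ p : ℕ × ℕ × ℕ, Even p.2.2 → x p = σ3 p fun q => x q.1 :=
      fun p hp => playAux_even _ _ p hp
    have hxB := hσ3 x hcons
    have hzx : decodeZ x = z := by
      funext p
      exact blockZero σ3 (FI z y) z (Or.inl hz)
        (Or.inr fun m n hh hn => by simp [FI]) p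
    have hyx : decodeY x = y := by
      funext p
      rcases Nat.even_or_odd p.2 with hp | hp
      · rw [hy p hp]
        funext j
        show x (p.1 + 1, p.2, 2 * j + bitOf p.2) = _
        have hb : bitOf p.2 = 0 := if_pos hp
        rw [hb]
        have hgood : good p (p.1 + 1, p.2, 2 * j + 0) := by
          refine Or.inr ⟨Nat.succ_pos _, Or.inr ⟨?_, hp⟩⟩
          simp
        have hag : ∀ q, lex2 q p → y q = extendAt p (fun q => y q.1) q := by
          intro q hq
          unfold extendAt
          rw [dif_pos hq]
        have := play_depend σ3 z y (extendAt p (fun q => y q.1)) p hag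
          (p.1 + 1, p.2, 2 * j + 0) hgood
        exact this
      · funext j
        show x (p.1 + 1, p.2, 2 * j + bitOf p.2) = y p j
        have hb : bitOf p.2 = 1 := if_neg (by simpa [Nat.not_even_iff_odd] using hp)
        rw [hb]
        have hodd : Odd (2 * j + 1) := ⟨j, by omega⟩
        rw [hx, playAux_odd _ _ _ hodd]
        show FI z y (p.1 + 1, p.2, 2 * j + 1) _ = y p j
        unfold FI
        rw [if_neg (Nat.succ_ne_zero p.1),
          if_neg (by simpa [Nat.not_even_iff_odd] using hp)]
        show y (p.1 + 1 - 1, p.2) ((2 * j + 1 - 1) / 2) = y p j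
        have h1 : (p.1 + 1 - 1, p.2) = p := by simp
        have h2 : (2 * j + 1 - 1) / 2 = j := by omega
        rw [h1, h2]
    show (z, y) ∈ B
    rw [← hzx, ← hyx]
    exact hxB
  · -- Player II wins
    right
    refine ⟨strat2of τ3, ?_⟩
    intro z hz hzC
    simp only [hC, Set.mem_setOf_eq] at hzC
    obtain ⟨σR, hσR⟩ := hzC
    set x := playAux (GII z σR) τ3 with hx
    have hcons : ∀ p : ℕ × ℕ × ℕ, Odd p.2.2 → x p = τ3 p fun q => x q.1 :=
      fun p hp => playAux_odd _ _ p hp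
    have hxB := hτ3 x hcons
    have hzx : decodeZ x = z := by
      funext p
      exact blockZero (GII z σR) τ3 z
        (Or.inr fun m n hh hn => by simp [GII]) (Or.inl hz) p
    have hycons : ∀ p : ℕ × ℕ, Even p.2 →
        decodeY x p = σR p fun q => decodeY x q.1 := by
      intro p hp
      funext j
      show x (p.1 + 1, p.2, 2 * j + bitOf p.2) = _
      have hb : bitOf p.2 = 0 := if_pos hp
      rw [hb]
      have heven : Even (2 * j + 0) := ⟨j, by omega⟩
      rw [hx, playAux_even _ _ _ heven]
      show GII z σR (p.1 + 1, p.2, 2 * j + 0) _ = _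
      unfold GII
      rw [dif_neg (Nat.succ_ne_zero p.1), if_pos hp]
      show σR p (yhist (p.1 + 1, p.2, 2 * j + 0) (Nat.succ_ne_zero p.1)
        fun q => playAux (GII z σR) τ3 q.1) ((2 * j + 0) / 2) = _
      have h2 : (2 * j + 0) / 2 = j := by omega
      rw [h2]
      congr 1
    have hyB := hσR (decodeY x) hycons
    apply hxB
    show (decodeZ x, decodeY x) ∈ B
    rw [hzx]
    exact hyB

/-- If all open games of length ω³ on ℕ are determined, then all games of length ω²
on ℕ with payoff in ⅁ℝ_{ω²}Σ⁰₁ are determined. -/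
theorem openOmegaCubedDet_imp_gameClassOmegaSqDet
    (h : ∀ A : Set ((ℕ × ℕ × ℕ) → ℕ), IsOpen A → Determined3 A) :
    ∀ C : Set ((ℕ × ℕ) → ℕ), InGameR2Sigma01 C → Determined2 C := by
  exact aux_main h

end
end

section
/- For every A ⊆ (ℕ → ℝ), Player I has a winning strategy in the game 𝒢_A if and only if Player I has a winning strategy in the game G_A. -/
noncomputable section

/-- The homeomorphism `e : (ℕ → ℝ) ≃ ℝ` induced by the pairing bijection `ℕ × ℕ ≃ ℕ`. -/
def e : (ℕ → Baire) ≃ Baire :=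
  (Equiv.curry ℕ ℕ ℕ).symm.trans (Equiv.arrowCongr Nat.pairEquiv (Equiv.refl ℕ))

/-- The history of the first `n` moves when the strategy `σ` for Player I is faced off
against the strategy `τ` for Player II in a length-ω game on ℝ. -/
def histPlay (σ τ : List Baire → Baire) : ℕ → List Baire
  | 0 => []
  | n + 1 =>
    let l := histPlay σ τ n
    l ++ [if Even n then σ l else τ l]

/-- The run obtained by facing off `σ` (as Player I) against `τ` (as Player II). -/
def playRun (σ τ : List Baire → Baire) (n : ℕ) : Baire :=
  if Even n then σ (histPlay σ τ n) else τ (histPlay σ τ n)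

/-- `σ*τ`: the real coding the run obtained by facing off `σ` against `τ`. -/
def faceOff (σ τ : List Baire → Baire) : Baire := e (playRun σ τ)


/-- Legality of Player I's move `X` at turn `k` of the game `𝒢_A`: if `k` is even,
Player I must have a winning strategy in the game on ℝ with payoff `X`; if `k` is odd,
Player II must have no winning strategy in the game on ℝ with payoff `X`. -/
def LegalMove (k : ℕ) (X : Set Baire) : Prop :=
  if Even k then ∃ σ, WinStratI {q : ℕ → Baire | e q ∈ X} σ
  else ¬ ∃ τ, WinStratII {q : ℕ → Baire | e q ∈ X} τ

/-- `σ` is a winning strategy for Player I in the game `𝒢_A`: at turn `k` Player I plays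
the set `X_k = σ (x₀,…,x_{k-1})` and Player II responds with a real `x_k ∈ X_k`.
Player I wins a run iff either Player II is the first to break a rule (she plays some
`x_k ∉ X_k` while all of Player I's moves so far were legal), or all moves were legal
throughout and `(x₀,x₁,…) ∈ A`. -/
def GcalWinsI (A : Set (ℕ → Baire)) (σ : List Baire → Set Baire) : Prop :=
  ∀ x : ℕ → Baire,
    (∃ k, (∀ j ≤ k, LegalMove j (σ (resSeq x j))) ∧ (∀ j < k, x j ∈ σ (resSeq x j)) ∧
      x k ∉ σ (resSeq x k)) ∨
    ((∀ k, LegalMove k (σ (resSeq x k))) ∧ (∀ k, x k ∈ σ (resSeq x k)) ∧ x ∈ A)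

/-- The sequence of reals `x₀, x₁, …` determined by a run `s` of the game `G_A`:
`x_{2k} = s(4k) * s(4k+1)` and `x_{2k+1} = s(4k+3) * s(4k+2)`. -/
def GxSeq (s : ℕ → (List Baire → Baire)) (m : ℕ) : Baire :=
  if Even m then faceOff (s (2 * m)) (s (2 * m + 1)) else faceOff (s (2 * m + 1)) (s (2 * m))

/-- `S` is a winning strategy for Player I in the game `G_A`: Player I plays the moves
at turns of the form `4n` and `4n+3` (strategies for Player I in length-ω games on ℝ),
Player II plays at turns `4n+1` and `4n+2` (strategies for Player II); Player I wins a
run `s` iff the induced sequence of reals lies in `A`. -/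
def GWinsI (A : Set (ℕ → Baire)) (S : List (List Baire → Baire) → (List Baire → Baire)) :
    Prop :=
  ∀ s : ℕ → (List Baire → Baire),
    (∀ k, k % 4 = 0 ∨ k % 4 = 3 → s k = S (resSeq s k)) → (fun m => GxSeq s m) ∈ A

theorem resSeq_length {α : Type*} (x : ℕ → α) (n : ℕ) : (resSeq x n).length = n := by
  simp [resSeq]

theorem resSeq_succ {α : Type*} (x : ℕ → α) (n : ℕ) :
    resSeq x (n + 1) = resSeq x n ++ [x n] := by
  rw [resSeq, List.ofFn_succ']
  simp [resSeq]

theorem resSeq_getElem {α : Type*} (x : ℕ → α) {n i : ℕ} (h : i < n) :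
    (resSeq x n)[i]'(by simp [resSeq_length]; omega) = x i := by
  simp [resSeq]

theorem resSeq_getD {α : Type*} [Inhabited α] (x : ℕ → α) {n i : ℕ} (h : i < n) :
    (resSeq x n).getD i default = x i := by
  rw [List.getD_eq_getElem _ _ (by simp [resSeq_length]; omega)]
  exact resSeq_getElem x h

theorem resSeq_congr {α : Type*} {x y : ℕ → α} {n : ℕ} (h : ∀ i < n, x i = y i) :
    resSeq x n = resSeq y n := by
  unfold resSeq
  congr 1
  funext i
  exact h i i.isLt

theorem histPlay_eq (σ τ : List Baire → Baire) (n : ℕ) :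
    histPlay σ τ n = resSeq (playRun σ τ) n := by
  induction n with
  | zero => simp [histPlay, resSeq]
  | succ n ih =>
    have hp : playRun σ τ n = if Even n then σ (histPlay σ τ n) else τ (histPlay σ τ n) := rfl
    rw [resSeq_succ]
    show histPlay σ τ n ++ [if Even n then σ (histPlay σ τ n) else τ (histPlay σ τ n)] = _
    rw [ih, hp, ih]

theorem playRun_even (σ τ : List Baire → Baire) (n : ℕ) :
    playRun σ τ (2 * n) = σ (resSeq (playRun σ τ) (2 * n)) := by
  rw [playRun, histPlay_eq, if_pos (even_two_mul n)]

theorem playRun_odd (σ τ : List Baire → Baire) (n : ℕ) :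
    playRun σ τ (2 * n + 1) = τ (resSeq (playRun σ τ) (2 * n + 1)) := by
  rw [playRun, histPlay_eq, if_neg (by simp [Nat.even_add_one, parity_simps])]

theorem playRun_eq (σ τ : List Baire → Baire) (p : ℕ → Baire)
    (h : ∀ n, p n = if Even n then σ (resSeq p n) else τ (resSeq p n)) :
    playRun σ τ = p := by
  funext n
  induction n using Nat.strong_induction_on with
  | _ n ih =>
    have hres : resSeq (playRun σ τ) n = resSeq p n := resSeq_congr fun i hi => ih i hi
    rw [playRun, histPlay_eq, hres]
    exact (h n).symm


abbrev Strat : Type := List Baire → Baire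

/-- The "blind" strategy for II reproducing the run coded by `x`. -/
def tauOf (x : Baire) : Strat := fun l => e.symm x l.length

/-- One step of translating a 𝒢-history of reals to a G-history of strategies. -/
def stepG (S : List Strat → Strat) (h : List Strat) (x : Baire) : List Strat :=
  if h.length % 4 = 0 then h ++ [S h, tauOf x]
  else
    let τ := Classical.epsilon (fun τ => x = faceOff (S (h ++ [τ])) τ)
    h ++ [τ, S (h ++ [τ])]

def ghG (S : List Strat → Strat) (l : List Baire) : List Strat := l.foldl (stepG S) []

/-- The 𝒢-strategy induced by a G-strategy `S`. -/
def sigGcal (S : List Strat → Strat) (l : List Baire) : Set Baire :=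
  if Even l.length then
    {r | ∀ n, (e.symm r) (2 * n) = (S (ghG S l)) (resSeq (e.symm r) (2 * n))}
  else {r | ∃ τ, r = faceOff (S (ghG S l ++ [τ])) τ}

theorem stepG_eq_append (S : List Strat → Strat) (h : List Strat) (x : Baire) :
    ∃ a b, stepG S h x = h ++ [a, b] := by
  unfold stepG; split_ifs <;> exact ⟨_, _, rfl⟩

theorem stepG_length (S : List Strat → Strat) (h : List Strat) (x : Baire) :
    (stepG S h x).length = h.length + 2 := by
  obtain ⟨a, b, hab⟩ := stepG_eq_append S h x
  simp [hab]

theorem legal_sigGcal (S : List Strat → Strat) (l : List Baire) :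
    LegalMove l.length (sigGcal S l) := by
  unfold LegalMove
  by_cases hE : Even l.length
  · rw [if_pos hE]
    refine ⟨S (ghG S l), fun q hq => ?_⟩
    show e q ∈ sigGcal S l
    rw [sigGcal, if_pos hE]
    simpa using hq
  · rw [if_neg hE]
    rintro ⟨τ, hτ⟩
    refine hτ (playRun (S (ghG S l ++ [τ])) τ) (fun n => playRun_odd _ _ n) ?_
    show e _ ∈ sigGcal S l
    rw [sigGcal, if_neg hE]
    exact ⟨τ, rfl⟩

/-- The G-history of strategies induced by a 𝒢-history of reals. -/
def Hg (S : List Strat → Strat) (x : ℕ → Baire) (k : ℕ) : List Strat := ghG S (resSeq x k)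

/-- The choice of II's strategy at odd real-moves. -/
def tcg (S : List Strat → Strat) (x : ℕ → Baire) (k : ℕ) : Strat :=
  Classical.epsilon (fun τ => x k = faceOff (S (Hg S x k ++ [τ])) τ)

/-- The run of `G` induced by a 𝒢-run of reals `x`. -/
def sg (S : List Strat → Strat) (x : ℕ → Baire) (n : ℕ) : Strat :=
  (Hg S x (n / 2 + 1)).getD n default

theorem Hg_succ (S : List Strat → Strat) (x : ℕ → Baire) (k : ℕ) :
    Hg S x (k + 1) = stepG S (Hg S x k) (x k) := by
  show ghG S (resSeq x (k + 1)) = _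
  rw [resSeq_succ, ghG, List.foldl_append]
  rfl

theorem Hg_length (S : List Strat → Strat) (x : ℕ → Baire) (k : ℕ) :
    (Hg S x k).length = 2 * k := by
  induction k with
  | zero => simp [Hg, resSeq, ghG]
  | succ k ih => rw [Hg_succ, stepG_length, ih]; ring

theorem Hg_step_even (S : List Strat → Strat) (x : ℕ → Baire) {k : ℕ} (hk : Even k) :
    Hg S x (k + 1) = Hg S x k ++ [S (Hg S x k), tauOf (x k)] := by
  rw [Hg_succ, stepG, if_pos (by rw [Hg_length]; rw [Nat.even_iff] at hk; omega)]

theorem Hg_step_odd (S : List Strat → Strat) (x : ℕ → Baire) {k : ℕ} (hk : ¬ Even k) :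
    Hg S x (k + 1) = Hg S x k ++ [tcg S x k, S (Hg S x k ++ [tcg S x k])] := by
  rw [Hg_succ, stepG, if_neg (by rw [Hg_length]; rw [Nat.even_iff] at hk; omega)]
  rfl

theorem Hg_prefix (S : List Strat → Strat) (x : ℕ → Baire) {j k : ℕ} (hjk : j ≤ k) :
    Hg S x j <+: Hg S x k := by
  induction k, hjk using Nat.le_induction with
  | base => exact List.prefix_refl _
  | succ k hk ih =>
    obtain ⟨a, b, hab⟩ := stepG_eq_append S (Hg S x k) (x k)
    rw [Hg_succ, hab]
    exact ih.trans (List.prefix_append _ _)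

theorem sg_eq (S : List Strat → Strat) (x : ℕ → Baire) {n k : ℕ} (hnk : n < 2 * k) :
    sg S x n = (Hg S x k).getD n default := by
  rcases le_total (n / 2 + 1) k with h | h
  · obtain ⟨t, ht⟩ := Hg_prefix S x h
    rw [sg, ← ht, List.getD_append]
    rw [Hg_length]; omega
  · obtain ⟨t, ht⟩ := Hg_prefix S x h
    rw [sg, ← ht, List.getD_append]
    rw [Hg_length]; omega

theorem resSeq_sg (S : List Strat → Strat) (x : ℕ → Baire) (k : ℕ) :
    resSeq (sg S x) (2 * k) = Hg S x k := by
  apply List.ext_getElem (by rw [resSeq_length, Hg_length])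
  intro i h1 h2
  rw [resSeq_length] at h1
  rw [resSeq_getElem _ h1, ← List.getD_eq_getElem _ default h2]
  exact sg_eq S x (by rwa [Hg_length] at h2)

theorem getD_pair_0 (l : List Strat) (a b : Strat) :
    (l ++ [a, b]).getD l.length default = a := by
  rw [List.getD_append_right _ _ _ _ le_rfl]
  simp

theorem getD_pair_1 (l : List Strat) (a b : Strat) :
    (l ++ [a, b]).getD (l.length + 1) default = b := by
  rw [List.getD_append_right _ _ _ _ (by omega)]
  simp

theorem sg_4j (S : List Strat → Strat) (x : ℕ → Baire) (j : ℕ) :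
    sg S x (4 * j) = S (Hg S x (2 * j)) := by
  rw [sg_eq S x (show 4 * j < 2 * (2 * j + 1) by omega),
    Hg_step_even S x (even_two_mul j),
    show 4 * j = (Hg S x (2 * j)).length by rw [Hg_length]; ring]
  exact getD_pair_0 _ _ _

theorem sg_4j1 (S : List Strat → Strat) (x : ℕ → Baire) (j : ℕ) :
    sg S x (4 * j + 1) = tauOf (x (2 * j)) := by
  rw [sg_eq S x (show 4 * j + 1 < 2 * (2 * j + 1) by omega),
    Hg_step_even S x (even_two_mul j),
    show 4 * j + 1 = (Hg S x (2 * j)).length + 1 by rw [Hg_length]; ring]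
  exact getD_pair_1 _ _ _

theorem sg_4j2 (S : List Strat → Strat) (x : ℕ → Baire) (j : ℕ) :
    sg S x (4 * j + 2) = tcg S x (2 * j + 1) := by
  rw [sg_eq S x (show 4 * j + 2 < 2 * (2 * j + 2) by omega),
    Hg_step_odd S x (by simp [Nat.even_add_one, parity_simps]),
    show 4 * j + 2 = (Hg S x (2 * j + 1)).length by rw [Hg_length]; ring]
  exact getD_pair_0 _ _ _

theorem sg_4j3 (S : List Strat → Strat) (x : ℕ → Baire) (j : ℕ) :
    sg S x (4 * j + 3) = S (Hg S x (2 * j + 1) ++ [tcg S x (2 * j + 1)]) := by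
  rw [sg_eq S x (show 4 * j + 3 < 2 * (2 * j + 2) by omega),
    Hg_step_odd S x (by simp [Nat.even_add_one, parity_simps]),
    show 4 * j + 3 = (Hg S x (2 * j + 1)).length + 1 by rw [Hg_length]; ring]
  exact getD_pair_1 _ _ _

theorem sg_follows (S : List Strat → Strat) (x : ℕ → Baire) :
    ∀ k, k % 4 = 0 ∨ k % 4 = 3 → sg S x k = S (resSeq (sg S x) k) := by
  intro k hk
  rcases hk with h0 | h3
  · obtain ⟨j, rfl⟩ : ∃ j, k = 4 * j := ⟨k / 4, by omega⟩
    rw [sg_4j, show 4 * j = 2 * (2 * j) by ring, resSeq_sg]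
  · obtain ⟨j, rfl⟩ : ∃ j, k = 4 * j + 3 := ⟨k / 4, by omega⟩
    rw [sg_4j3]
    rw [show 4 * j + 3 = (4 * j + 2) + 1 by ring, resSeq_succ,
      show 4 * j + 2 = 2 * (2 * j + 1) by ring, resSeq_sg,
      show 2 * (2 * j + 1) = 4 * j + 2 by ring, sg_4j2]


theorem G_to_Gcal {A : Set (ℕ → Baire)} {S : List Strat → Strat} (hS : GWinsI A S) :
    GcalWinsI A (sigGcal S) := by
  classical
  intro x
  by_cases hc : ∀ k, x k ∈ sigGcal S (resSeq x k)
  · right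
    refine ⟨fun k => ?_, hc, ?_⟩
    · have := legal_sigGcal S (resSeq x k); rwa [resSeq_length] at this
    -- the main part: the induced run of G yields exactly x
    have hA := hS (sg S x) (sg_follows S x)
    have hx : (fun m => GxSeq (sg S x) m) = x := by
      funext m
      rcases Nat.even_or_odd m with hm | hm
      · obtain ⟨j, rfl⟩ : ∃ j, m = 2 * j := ⟨m / 2, by rw [Nat.even_iff] at hm; omega⟩
        show GxSeq (sg S x) (2 * j) = x (2 * j)
        rw [GxSeq, if_pos (even_two_mul j),
          show 2 * (2 * j) = 4 * j by ring, sg_4j, sg_4j1]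
        have hcm := hc (2 * j)
        rw [sigGcal, if_pos (by rw [resSeq_length]; exact even_two_mul j)] at hcm
        simp only [Set.mem_setOf_eq] at hcm
        have hrun : playRun (S (Hg S x (2 * j))) (tauOf (x (2 * j))) = e.symm (x (2 * j)) := by
          apply playRun_eq
          intro n
          split_ifs with hn
          · obtain ⟨i, rfl⟩ := hn
            rw [show i + i = 2 * i by ring]
            exact hcm i
          · show _ = e.symm (x (2 * j)) (resSeq (e.symm (x (2 * j))) n).length
            rw [resSeq_length]
        rw [faceOff, hrun, Equiv.apply_symm_apply]
      · obtain ⟨j, rfl⟩ : ∃ j, m = 2 * j + 1 := ⟨m / 2, by rw [Nat.odd_iff] at hm; omega⟩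
        show GxSeq (sg S x) (2 * j + 1) = x (2 * j + 1)
        rw [GxSeq, if_neg (by simp [Nat.even_add_one, parity_simps]),
          show 2 * (2 * j + 1) + 1 = 4 * j + 3 by ring,
          show 2 * (2 * j + 1) = 4 * j + 2 by ring,
          sg_4j3, sg_4j2]
        have hcm := hc (2 * j + 1)
        rw [sigGcal, if_neg (by rw [resSeq_length]; simp [Nat.even_add_one, parity_simps])]
          at hcm
        simp only [Set.mem_setOf_eq] at hcm
        exact (Classical.epsilon_spec hcm).symm
    rw [← hx]; exact hA
  · left
    push_neg at hc
    refine ⟨Nat.find hc, fun j _ => ?_, fun j hj => ?_, Nat.find_spec hc⟩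
    · have := legal_sigGcal S (resSeq x j); rwa [resSeq_length] at this
    · exact not_not.mp (Nat.find_min hc hj)


/-- The reals induced by a finite G-history of strategies. -/
def xsOf (l : List Strat) (m : ℕ) : Baire :=
  if Even m then faceOff (l.getD (2 * m) default) (l.getD (2 * m + 1) default)
  else faceOff (l.getD (2 * m + 1) default) (l.getD (2 * m) default)

def xlOf (l : List Strat) : List Baire := List.ofFn fun i : Fin (l.length / 2) => xsOf l i

/-- The G-strategy induced by a 𝒢-strategy `σ`. -/
def SG (σ : List Baire → Set Baire) (l : List Strat) : Strat :=
  if l.length % 4 = 0 then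
    Classical.epsilon (fun s => WinStratI {q : ℕ → Baire | e q ∈ σ (xlOf l)} s)
  else
    let τ := l.getD (l.length - 1) default
    let p := Classical.epsilon (fun p : ℕ → Baire =>
      (∀ n, p (2 * n + 1) = τ (resSeq p (2 * n + 1))) ∧ e p ∈ σ (xlOf l))
    fun m => p m.length

theorem xsOf_resSeq (s : ℕ → Strat) {k m : ℕ} (h : 2 * m + 1 < k) :
    xsOf (resSeq s k) m = GxSeq s m := by
  rw [xsOf, GxSeq, resSeq_getD s (by omega), resSeq_getD s (by omega)]

theorem xlOf_resSeq (s : ℕ → Strat) (k : ℕ) :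
    xlOf (resSeq s k) = resSeq (fun m => GxSeq s m) (k / 2) := by
  apply List.ext_getElem (by simp [xlOf, resSeq_length])
  intro i h1 h2
  have hi : i < k / 2 := by simpa [xlOf, resSeq_length] using h1
  rw [show (xlOf (resSeq s k))[i] = xsOf (resSeq s k) i by simp [xlOf],
    resSeq_getElem _ hi, xsOf_resSeq s (by omega)]

theorem Gcal_to_G {A : Set (ℕ → Baire)} {σ : List Baire → Set Baire} (hσ : GcalWinsI A σ) :
    GWinsI A (SG σ) := by
  intro s hs
  set x : ℕ → Baire := fun m => GxSeq s m with hxdef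
  -- legality given compliance below m
  have leg : ∀ m, (∀ j < m, x j ∈ σ (resSeq x j)) → LegalMove m (σ (resSeq x m)) := by
    intro m hcomp
    rcases hσ x with ⟨k, hleg, _, hviol⟩ | ⟨hleg, _, _⟩
    · refine hleg m ?_
      by_contra h
      exact hviol (hcomp k (by omega))
    · exact hleg m
  -- compliance, by strong induction
  have comp : ∀ m, x m ∈ σ (resSeq x m) := by
    intro m
    induction m using Nat.strong_induction_on with
    | _ m ih =>
      have hlegm := leg m ih
      rcases Nat.even_or_odd m with hm | hm
      · obtain ⟨j, rfl⟩ : ∃ j, m = 2 * j := ⟨m / 2, by rw [Nat.even_iff] at hm; omega⟩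
        rw [LegalMove, if_pos (even_two_mul j)] at hlegm
        have hx2j : x (2 * j) = faceOff (s (4 * j)) (s (4 * j + 1)) := by
          rw [hxdef]
          show GxSeq s (2 * j) = _
          rw [GxSeq, if_pos (even_two_mul j), show 2 * (2 * j) = 4 * j by ring]
        have hxl : xlOf (resSeq s (4 * j)) = resSeq x (2 * j) := by
          rw [xlOf_resSeq, show 4 * j / 2 = 2 * j by omega]
        have hs4j : s (4 * j) = Classical.epsilon
            (fun t => WinStratI {q : ℕ → Baire | e q ∈ σ (resSeq x (2 * j))} t) := by
          rw [hs (4 * j) (Or.inl (by omega)), SG,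
            if_pos (by rw [resSeq_length]; omega), hxl]
        have hwin : WinStratI {q : ℕ → Baire | e q ∈ σ (resSeq x (2 * j))} (s (4 * j)) := by
          rw [hs4j]
          exact Classical.epsilon_spec hlegm
        have := hwin (playRun (s (4 * j)) (s (4 * j + 1))) (fun n => playRun_even _ _ n)
        rw [hx2j]
        exact this
      · obtain ⟨j, rfl⟩ : ∃ j, m = 2 * j + 1 := ⟨m / 2, by rw [Nat.odd_iff] at hm; omega⟩
        rw [LegalMove, if_neg (by simp [Nat.even_add_one, parity_simps])] at hlegm
        have hx2j : x (2 * j + 1) = faceOff (s (4 * j + 3)) (s (4 * j + 2)) := by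
          rw [hxdef]
          show GxSeq s (2 * j + 1) = _
          rw [GxSeq, if_neg (by simp [Nat.even_add_one, parity_simps]),
            show 2 * (2 * j + 1) + 1 = 4 * j + 3 by ring,
            show 2 * (2 * j + 1) = 4 * j + 2 by ring]
        have hxl : xlOf (resSeq s (4 * j + 3)) = resSeq x (2 * j + 1) := by
          rw [xlOf_resSeq, show (4 * j + 3) / 2 = 2 * j + 1 by omega]
        have htau : (resSeq s (4 * j + 3)).getD ((resSeq s (4 * j + 3)).length - 1) default
            = s (4 * j + 2) := by
          rw [resSeq_length]
          exact resSeq_getD s (by omega)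
        -- the payoff set at this turn
        have hnw : ¬ WinStratII {q : ℕ → Baire | e q ∈ σ (resSeq x (2 * j + 1))}
            (s (4 * j + 2)) := fun h => hlegm ⟨_, h⟩
        have hex : ∃ p : ℕ → Baire,
            (∀ n, p (2 * n + 1) = s (4 * j + 2) (resSeq p (2 * n + 1))) ∧
            e p ∈ σ (resSeq x (2 * j + 1)) := by
          rw [WinStratII] at hnw
          push_neg at hnw
          obtain ⟨p, h1, h2⟩ := hnw
          exact ⟨p, h1, h2⟩
        have hs4j3 : s (4 * j + 3) =
            fun m => Classical.epsilon (fun p : ℕ → Baire =>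
              (∀ n, p (2 * n + 1) = s (4 * j + 2) (resSeq p (2 * n + 1))) ∧
              e p ∈ σ (resSeq x (2 * j + 1))) m.length := by
          rw [hs (4 * j + 3) (Or.inr (by omega)), SG,
            if_neg (by rw [resSeq_length]; omega)]
          simp only []
          rw [htau, hxl]
        set p₀ := Classical.epsilon (fun p : ℕ → Baire =>
            (∀ n, p (2 * n + 1) = s (4 * j + 2) (resSeq p (2 * n + 1))) ∧
            e p ∈ σ (resSeq x (2 * j + 1))) with hp₀
        have hspec := Classical.epsilon_spec hex
        rw [← hp₀] at hspec
        have hrun : playRun (s (4 * j + 3)) (s (4 * j + 2)) = p₀ := by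
          apply playRun_eq
          intro n
          split_ifs with hn
          · rw [hs4j3]
            show p₀ n = p₀ (resSeq p₀ n).length
            rw [resSeq_length]
          · obtain ⟨i, rfl⟩ : ∃ i, n = 2 * i + 1 := by
              rcases Nat.even_or_odd n with h | ⟨i, hi⟩
              · exact absurd h hn
              · exact ⟨i, by omega⟩
            exact hspec.1 i
        rw [hx2j, faceOff, hrun]
        exact hspec.2
  -- conclude
  rcases hσ x with ⟨k, _, _, hviol⟩ | ⟨_, _, hA⟩
  · exact absurd (comp k) hviol
  · exact hA

/-- Player I has a winning strategy in `𝒢_A` iff she has one in `G_A`. -/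
theorem Gcal_iff_G (A : Set (ℕ → Baire)) :
    (∃ σ, GcalWinsI A σ) ↔ (∃ S, GWinsI A S) :=
  ⟨fun ⟨σ, hσ⟩ => ⟨SG σ, Gcal_to_G hσ⟩, fun ⟨S, hS⟩ => ⟨sigGcal S, G_to_Gcal hS⟩⟩

end
end

section
/- Suppose that every game of length ω² on ℕ whose payoff belongs to ⅁ℝ_{ω²}Σ⁰₁ (as a subset of the space (ℕ×ℕ) → ℕ with the product topology) is determined. Then every game of length ω³ on ℕ with open payoff (i.e., payoff A ⊆ ((ℕ×ℕ×ℕ) → ℕ) open in the product topology) is determined. -/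
noncomputable section

/-! ### Auxiliary development -/

namespace OmegaCubedAux

/-- Junk strategy for real games. -/
def junkR : Strat2 Baire := fun _ _ => fun _ => 0
/-- Junk strategy for ℕ games. -/
def junkN : Strat2 ℕ := fun _ _ => 0

def enc (l : List ℕ) : ℕ := Encodable.encode l
def dec (n : ℕ) : List ℕ := Denumerable.ofNat (List ℕ) n

lemma dec_enc (l : List ℕ) : dec (enc l) = l := Denumerable.ofNat_encode l

lemma resSeq_length {α : Type*} (x : ℕ → α) (m : ℕ) : (resSeq x m).length = m := by
  simp [resSeq]

lemma resSeq_getD (x : ℕ → ℕ) (m i : ℕ) (h : i < m) : (resSeq x m).getD i 0 = x i := by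
  rw [resSeq, List.getD_eq_getElem _ _ (by simpa using h)]
  simp

lemma resSeq_congr {α : Type*} {x y : ℕ → α} (m : ℕ) (h : ∀ i < m, x i = y i) :
    resSeq x m = resSeq y m := by
  unfold resSeq
  congr 1
  funext i
  exact h i i.2

lemma lex2_trans {p q r : ℕ × ℕ} (h1 : lex2 p q) (h2 : lex2 q r) : lex2 p r := by
  rcases h1 with h1 | ⟨h1, h1'⟩ <;> rcases h2 with h2 | ⟨h2, h2'⟩ <;>
    unfold lex2 <;> omega

lemma lex2_wf : WellFounded lex2 := by
  have hsub : @Subrelation (ℕ × ℕ) lex2 (Prod.Lex (· < ·) (· < ·)) := by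
    intro p q h
    rcases h with h | ⟨h, h'⟩
    · exact Prod.Lex.left _ _ h
    · have : p = (p.1, p.2) := rfl
      rw [this, show q = (q.1, q.2) from rfl, h]
      exact Prod.Lex.right _ h'
  exact Subrelation.wf hsub (WellFounded.prod_lex Nat.lt_wfRel.wf Nat.lt_wfRel.wf)

/-- Gluing: the full ω³ run from superblocks `< k` given by `p`, superblock `k` given by `z`,
and later superblocks read off the "block" (odd) moves of the real-game run `Y`. -/
def glue (k : ℕ) (p : ℕ → (ℕ × ℕ) → ℕ) (z : (ℕ × ℕ) → ℕ) (Y : (ℕ × ℕ) → Baire) :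
    (ℕ × ℕ × ℕ) → ℕ := fun q =>
  if q.1 < k then p q.1 (q.2.1, q.2.2)
  else if q.1 = k then z (q.2.1, q.2.2)
  else Y (q.1 - k - 1, 2 * q.2.1 + 1) q.2.2

lemma glue_congr {k : ℕ} {p p' : ℕ → (ℕ × ℕ) → ℕ} (h : ∀ j < k, p j = p' j)
    (z : (ℕ × ℕ) → ℕ) (Y : (ℕ × ℕ) → Baire) : glue k p z Y = glue k p' z Y := by
  funext q
  unfold glue
  split_ifs with h1 h2
  · rw [h _ h1]
  · rfl
  · rfl

/-- Player II cheated in the simulation: some block fails to follow the strategy-real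
that Player I produced for it. -/
def Cheat (Y : (ℕ × ℕ) → Baire) : Prop :=
  ∃ j m i, Y (j, 2 * m + 1) (2 * i) ≠ Y (j, 2 * m) (enc (resSeq (Y (j, 2 * m + 1)) (2 * i)))

/-- The open payoff of the auxiliary real game after position `(k, p)` with current
superblock `z`. -/
def BSet (A : Set ((ℕ × ℕ × ℕ) → ℕ)) (k : ℕ) (p : ℕ → (ℕ × ℕ) → ℕ) :
    Set (((ℕ × ℕ) → ℕ) × ((ℕ × ℕ) → Baire)) :=
  {zy | Cheat zy.2 ∨ glue k p zy.1 zy.2 ∈ A}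

/-- The auxiliary length-ω² game on ℕ after position `(k, p)`. -/
def CSet (A : Set ((ℕ × ℕ × ℕ) → ℕ)) (k : ℕ) (p : ℕ → (ℕ × ℕ) → ℕ) :
    Set ((ℕ × ℕ) → ℕ) :=
  {z | GameR2I {y | (z, y) ∈ BSet A k p}}

lemma BSet_congr {A k} {p p' : ℕ → (ℕ × ℕ) → ℕ} (h : ∀ j < k, p j = p' j) :
    BSet A k p = BSet A k p' := by
  unfold BSet
  ext zy
  simp only [Set.mem_setOf_eq, glue_congr h]

lemma CSet_congr {A k} {p p' : ℕ → (ℕ × ℕ) → ℕ} (h : ∀ j < k, p j = p' j) :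
    CSet A k p = CSet A k p' := by
  unfold CSet
  rw [BSet_congr h]

lemma continuous_eval : Continuous fun q : Baire × ℕ => q.1 q.2 := by
  rw [continuous_discrete_rng]
  intro v
  have : (fun q : Baire × ℕ => q.1 q.2) ⁻¹' {v} =
      ⋃ n : ℕ, {b : Baire | b n = v} ×ˢ ({n} : Set ℕ) := by
    ext ⟨b, n⟩
    simp only [Set.mem_preimage, Set.mem_singleton_iff, Set.mem_iUnion, Set.mem_prod,
      Set.mem_setOf_eq]
    constructor
    · intro h
      exact ⟨n, h, rfl⟩
    · rintro ⟨n', h1, rfl⟩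
      exact h1
  rw [this]
  apply isOpen_iUnion
  intro n
  apply IsOpen.prod
  · have h2 : {b : Baire | b n = v} = (fun b : Baire => b n) ⁻¹' ({v} : Set ℕ) := rfl
    rw [h2]
    exact (continuous_apply (A := fun _ : ℕ => ℕ) n).isOpen_preimage ({v} : Set ℕ)
      (isOpen_discrete _)
  · exact isOpen_discrete ({n} : Set ℕ)

lemma continuous_encResSeq (n : ℕ) : Continuous fun b : Baire => enc (resSeq b n) := by
  have h1 : Continuous fun b : Baire => fun i : Fin n => b i :=
    continuous_pi fun i => continuous_apply _
  exact (continuous_of_discreteTopology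
    (f := fun v : Fin n → ℕ => enc (List.ofFn v))).comp h1

lemma isOpen_cheat : IsOpen {Y : (ℕ × ℕ) → Baire | Cheat Y} := by
  have : {Y : (ℕ × ℕ) → Baire | Cheat Y} =
      ⋃ j, ⋃ m, ⋃ i, {Y : (ℕ × ℕ) → Baire |
        (Y (j, 2 * m + 1) (2 * i), Y (j, 2 * m) (enc (resSeq (Y (j, 2 * m + 1)) (2 * i))))
          ∈ {pr : ℕ × ℕ | pr.1 ≠ pr.2}} := by
    ext Y
    simp [Cheat, Set.mem_iUnion]
  rw [this]
  refine isOpen_iUnion fun j => isOpen_iUnion fun m => isOpen_iUnion fun i => ?_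
  refine IsOpen.preimage ?_ (isOpen_discrete _)
  refine Continuous.prodMk ?_ ?_
  · exact (continuous_apply (2 * i)).comp (continuous_apply _)
  · refine continuous_eval.comp (Continuous.prodMk (continuous_apply _) ?_)
    exact (continuous_encResSeq (2 * i)).comp (continuous_apply _)

lemma continuous_glue (k : ℕ) (p : ℕ → (ℕ × ℕ) → ℕ) :
    Continuous fun zy : ((ℕ × ℕ) → ℕ) × ((ℕ × ℕ) → Baire) => glue k p zy.1 zy.2 := by
  refine continuous_pi fun q => ?_
  unfold glue
  split_ifs with h1 h2
  · exact continuous_const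
  · exact (continuous_apply _).comp continuous_fst
  · exact (continuous_apply q.2.2).comp
      ((continuous_apply ((q.1 : ℕ) - k - 1, 2 * q.2.1 + 1)).comp continuous_snd)

lemma isOpen_BSet {A : Set ((ℕ × ℕ × ℕ) → ℕ)} (hA : IsOpen A) (k : ℕ)
    (p : ℕ → (ℕ × ℕ) → ℕ) : IsOpen (BSet A k p) := by
  have : BSet A k p = (Prod.snd ⁻¹' {Y | Cheat Y}) ∪
      ((fun zy : ((ℕ × ℕ) → ℕ) × ((ℕ × ℕ) → Baire) => glue k p zy.1 zy.2) ⁻¹' A) := rfl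
  rw [this]
  exact ((isOpen_cheat.preimage continuous_snd).union ((continuous_glue k p).isOpen_preimage _ hA))

lemma CSet_mem_class {A : Set ((ℕ × ℕ × ℕ) → ℕ)} (hA : IsOpen A) (k : ℕ)
    (p : ℕ → (ℕ × ℕ) → ℕ) : InGameR2Sigma01 (CSet A k p) :=
  ⟨BSet A k p, isOpen_BSet hA k p, rfl⟩

lemma gameR2I_of_all {S : Set ((ℕ × ℕ) → Baire)} (h : ∀ Y, Y ∈ S) : GameR2I S :=
  ⟨junkR, fun Y _ => h Y⟩

open scoped Classical in
/-- A choice of winning strategy for Player I in the real game (if one exists). -/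
def SigAt (A : Set ((ℕ × ℕ × ℕ) → ℕ)) (k : ℕ) (p : ℕ → (ℕ × ℕ) → ℕ)
    (z' : (ℕ × ℕ) → ℕ) : Strat2 Baire :=
  if h : GameR2I {Y | (z', Y) ∈ BSet A k p} then h.choose else junkR

lemma SigAt_spec {A : Set ((ℕ × ℕ × ℕ) → ℕ)} (k : ℕ) (p : ℕ → (ℕ × ℕ) → ℕ)
    {z' : (ℕ × ℕ) → ℕ} (h : GameR2I {Y | (z', Y) ∈ BSet A k p}) :
    WinStrat2I {Y | (z', Y) ∈ BSet A k p} (SigAt A k p z') := by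
  rw [SigAt, dif_pos h]
  exact h.choose_spec

/-- The core of Player I's strategy in the simulated real game, as a function of the
total run (it only reads lexicographically earlier positions). -/
def Psi (A : Set ((ℕ × ℕ × ℕ) → ℕ)) (k : ℕ) (p : ℕ → (ℕ × ℕ) → ℕ)
    (z : (ℕ × ℕ) → ℕ) (τ' : Strat2 ℕ) : (ℕ × ℕ) → ((ℕ × ℕ) → Baire) → Baire :=
  fun pos Y =>
    if pos.1 = 0 then
      fun c => τ' (pos.2 / 2, (dec c).length) (fun q =>
        if q.1.1 = pos.2 / 2 then (dec c).getD q.1.2 0 else Y (0, 2 * q.1.1 + 1) q.1.2)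
    else
      SigAt A (k + 1) (Function.update p k z) (fun a => Y (0, 2 * a.1 + 1) a.2)
        (pos.1 - 1, pos.2) (fun q => Y (q.1.1 + 1, q.1.2))

lemma Psi_congr (A : Set ((ℕ × ℕ × ℕ) → ℕ)) (k : ℕ) (p : ℕ → (ℕ × ℕ) → ℕ)
    (z : (ℕ × ℕ) → ℕ) (τ' : Strat2 ℕ) (pos : ℕ × ℕ) {Y Y' : (ℕ × ℕ) → Baire}
    (h : ∀ q, lex2 q pos → Y q = Y' q) :
    Psi A k p z τ' pos Y = Psi A k p z τ' pos Y' := by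
  unfold Psi
  by_cases h0 : pos.1 = 0
  · rw [if_pos h0, if_pos h0]
    funext c
    congr 1
    funext q
    by_cases hq : q.1.1 = pos.2 / 2
    · rw [if_pos hq, if_pos hq]
    · rw [if_neg hq, if_neg hq]
      have hlt : q.1.1 < pos.2 / 2 := by
        rcases q.2 with h' | ⟨h', _⟩
        · exact h'
        · exact absurd h' hq
      rw [h (0, 2 * q.1.1 + 1) (Or.inr ⟨h0.symm, by omega⟩)]
  · rw [if_neg h0, if_neg h0]
    have hz' : (fun a : ℕ × ℕ => Y (0, 2 * a.1 + 1) a.2) =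
        fun a => Y' (0, 2 * a.1 + 1) a.2 := by
      funext a
      rw [h (0, 2 * a.1 + 1) (Or.inl (by omega))]
    have hsh : (fun q : {q : ℕ × ℕ // lex2 q (pos.1 - 1, pos.2)} => Y (q.1.1 + 1, q.1.2)) =
        fun q => Y' (q.1.1 + 1, q.1.2) := by
      funext q
      apply h
      rcases q.2 with h' | ⟨h', h''⟩
      · exact Or.inl (by omega)
      · exact Or.inr ⟨by omega, h''⟩
    rw [hz', hsh]

/-- **Key composition lemma.** If Player I wins the auxiliary ℕ-game one superblock
later (for every current superblock he might produce), then Player I wins the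
simulated real game now. -/
lemma L2 (A : Set ((ℕ × ℕ × ℕ) → ℕ)) (k : ℕ) (p : ℕ → (ℕ × ℕ) → ℕ) (z : (ℕ × ℕ) → ℕ)
    (hστ : ∃ σ, WinStrat2I (CSet A (k + 1) (Function.update p k z)) σ) :
    GameR2I {Y | (z, Y) ∈ BSet A k p} := by
  classical
  obtain ⟨τ', hτ'⟩ := hστ
  refine ⟨fun pos hist => Psi A k p z τ' pos
    (fun q => if h : lex2 q pos then hist ⟨q, h⟩ else fun _ => 0), ?_⟩
  intro Y hY
  have hYP : ∀ pos : ℕ × ℕ, Even pos.2 → Y pos = Psi A k p z τ' pos Y := by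
    intro pos hpos
    rw [hY pos hpos]
    exact Psi_congr A k p z τ' pos (fun q hq => dif_pos hq)
  by_cases hch : Cheat Y
  · exact Or.inl hch
  have hnc : ∀ j m i, Y (j, 2 * m + 1) (2 * i) =
      Y (j, 2 * m) (enc (resSeq (Y (j, 2 * m + 1)) (2 * i))) := by
    intro j m i
    by_contra hne
    exact hch ⟨j, m, i, hne⟩
  set z' : (ℕ × ℕ) → ℕ := fun a => Y (0, 2 * a.1 + 1) a.2 with hz'def
  have hz'C : z' ∈ CSet A (k + 1) (Function.update p k z) := by
    apply hτ'
    intro pos hpos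
    obtain ⟨m, n⟩ := pos
    have hev : Even n := hpos
    obtain ⟨i, hi⟩ := hev
    set l : List ℕ := resSeq (Y (0, 2 * m + 1)) n with hl
    have h2 : Y (0, 2 * m + 1) n = Y (0, 2 * m) (enc l) := by
      rw [hl]
      have h2i : n = 2 * i := by omega
      rw [h2i]
      exact hnc 0 m i
    have h3 : Y (0, 2 * m) = Psi A k p z τ' (0, 2 * m) Y :=
      hYP (0, 2 * m) ⟨m, by ring⟩
    have h4a : Psi A k p z τ' (0, 2 * m) Y (enc l)
        = τ' ((2 * m) / 2, (dec (enc l)).length) (fun q =>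
            if q.1.1 = (2 * m) / 2 then (dec (enc l)).getD q.1.2 0
            else Y (0, 2 * q.1.1 + 1) q.1.2) := rfl
    simp only [dec_enc] at h4a
    have e2 : (dec (enc l)).length = n := by
      rw [dec_enc, hl]
      exact resSeq_length _ _
    rw [e2] at h4a
    have e1 : (2 * m) / 2 = m := by omega
    rw [e1] at h4a
    have h5 : (fun q : {q : ℕ × ℕ // lex2 q (m, n)} => if q.1.1 = m then l.getD q.1.2 0
        else Y (0, 2 * q.1.1 + 1) q.1.2) = fun q => z' q.1 := by
      funext q
      by_cases hq : q.1.1 = m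
      · rw [if_pos hq]
        have hlt : q.1.2 < n := by
          rcases q.2 with h' | ⟨_, h'⟩
          · omega
          · exact h'
        rw [hl, resSeq_getD _ _ _ hlt]
        show Y (0, 2 * m + 1) q.1.2 = Y (0, 2 * q.1.1 + 1) q.1.2
        rw [hq]
      · rw [if_neg hq]
    calc z' (m, n) = Y (0, 2 * m + 1) n := rfl
    _ = Y (0, 2 * m) (enc l) := h2
    _ = Psi A k p z τ' (0, 2 * m) Y (enc l) := by rw [← h3]
    _ = τ' (m, n) (fun q => z' q.1) := by rw [h4a, h5]
  have hW : WinStrat2I {Y | (z', Y) ∈ BSet A (k + 1) (Function.update p k z)}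
      (SigAt A (k + 1) (Function.update p k z) z') :=
    SigAt_spec (k + 1) (Function.update p k z) hz'C
  set Y' : (ℕ × ℕ) → Baire := fun a => Y (a.1 + 1, a.2) with hY'def
  have hY'c : ∀ pos : ℕ × ℕ, Even pos.2 →
      Y' pos = SigAt A (k + 1) (Function.update p k z) z' pos (fun q => Y' q.1) := by
    intro pos hpos
    obtain ⟨a, b⟩ := pos
    have h1 : Y (a + 1, b) = Psi A k p z τ' (a + 1, b) Y := hYP (a + 1, b) hpos
    have h2' : Psi A k p z τ' (a + 1, b) Y
        = SigAt A (k + 1) (Function.update p k z) z' (a, b) (fun q => Y' q.1) := rfl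
    exact h1.trans h2'
  have hmem : Cheat Y' ∨ glue (k + 1) (Function.update p k z) z' Y' ∈ A := hW Y' hY'c
  rcases hmem with hch' | hglue
  · exfalso
    apply hch
    obtain ⟨j, m, i, hne⟩ := hch'
    exact ⟨j + 1, m, i, hne⟩
  · right
    have hge : glue (k + 1) (Function.update p k z) z' Y' = glue k p z Y := by
      funext q
      obtain ⟨j, m, n⟩ := q
      unfold glue
      by_cases h1 : j < k
      · rw [if_pos (show j < k + 1 by omega), if_pos h1,
          Function.update_of_ne (show j ≠ k by omega)]
      · by_cases h2 : j = k
        · rw [if_pos (show j < k + 1 by omega), if_neg h1, if_pos h2, h2,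
            Function.update_self]
        · by_cases h3 : j = k + 1
          · rw [if_neg (show ¬ j < k + 1 by omega), if_pos h3, if_neg h1, if_neg h2]
            show Y (0, 2 * m + 1) n = Y (j - k - 1, 2 * m + 1) n
            have : j - k - 1 = 0 := by omega
            rw [this]
          · rw [if_neg (show ¬ j < k + 1 by omega), if_neg h3, if_neg h1, if_neg h2]
            show Y (j - (k + 1) - 1 + 1, 2 * m + 1) n = Y (j - k - 1, 2 * m + 1) n
            have : j - (k + 1) - 1 + 1 = j - k - 1 := by omega
            rw [this]
    rw [← hge]
    exact hglue

/-! ### Player I's direction -/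

/-- Player I's auxiliary simulation run (of the real game) along an ω³ run `x`,
defined by recursion along `lex2`. -/
def Yx (Sg : Strat2 Baire) (x : (ℕ × ℕ × ℕ) → ℕ) : (ℕ × ℕ) → Baire :=
  lex2_wf.fix (fun pos rec =>
    if pos.2 % 2 = 1 then (fun i => x (pos.1 + 1, pos.2 / 2, i))
    else Sg pos (fun q => rec q.1 q.2))

lemma Yx_eq (Sg : Strat2 Baire) (x : (ℕ × ℕ × ℕ) → ℕ) (pos : ℕ × ℕ) :
    Yx Sg x pos =
      if pos.2 % 2 = 1 then (fun i => x (pos.1 + 1, pos.2 / 2, i))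
      else Sg pos (fun q => Yx Sg x q.1) := by
  rw [Yx, WellFounded.fix_eq]

lemma Yx_congr (Sg : Strat2 Baire) {x x' : (ℕ × ℕ × ℕ) → ℕ} (pos : ℕ × ℕ) :
    (∀ a b, (lex2 (a, 2 * b + 1) pos ∨ (a, 2 * b + 1) = pos) →
      ∀ i, x (a + 1, b, i) = x' (a + 1, b, i)) →
    Yx Sg x pos = Yx Sg x' pos := by
  refine lex2_wf.induction (C := fun pos =>
    (∀ a b, (lex2 (a, 2 * b + 1) pos ∨ (a, 2 * b + 1) = pos) →
      ∀ i, x (a + 1, b, i) = x' (a + 1, b, i)) →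
    Yx Sg x pos = Yx Sg x' pos) pos ?_
  intro pos IH hagree
  rw [Yx_eq, Yx_eq]
  by_cases hodd : pos.2 % 2 = 1
  · rw [if_pos hodd, if_pos hodd]
    funext i
    refine hagree pos.1 (pos.2 / 2) (Or.inr ?_) i
    have : 2 * (pos.2 / 2) + 1 = pos.2 := by omega
    rw [this]
  · rw [if_neg hodd, if_neg hodd]
    have harg : (fun q : {q : ℕ × ℕ // lex2 q pos} => Yx Sg x q.1)
        = fun q => Yx Sg x' q.1 := by
      funext q
      refine IH q.1 q.2 ?_
      intro a b hab i
      refine hagree a b ?_ i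
      rcases hab with hab | hab
      · exact Or.inl (lex2_trans hab q.2)
      · exact Or.inl (hab ▸ q.2)
    rw [harg]

/-- The core of Player I's ω³-strategy, as a function of the total run. -/
def Fcore (A : Set ((ℕ × ℕ × ℕ) → ℕ)) (p0 : ℕ → (ℕ × ℕ) → ℕ) (τ : Strat2 ℕ) :
    (ℕ × ℕ × ℕ) → ((ℕ × ℕ × ℕ) → ℕ) → ℕ := fun p x =>
  if p.1 = 0 then τ (p.2.1, p.2.2) (fun q => x (0, q.1.1, q.1.2))
  else Yx (SigAt A 0 p0 (fun a => x (0, a.1, a.2))) x (p.1 - 1, 2 * p.2.1)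
    (enc (resSeq (fun i => x (p.1, p.2.1, i)) p.2.2))

lemma Fcore_congr (A : Set ((ℕ × ℕ × ℕ) → ℕ)) (p0 : ℕ → (ℕ × ℕ) → ℕ) (τ : Strat2 ℕ)
    (p : ℕ × ℕ × ℕ) {x x' : (ℕ × ℕ × ℕ) → ℕ} (hagree : ∀ q, lex3 q p → x q = x' q) :
    Fcore A p0 τ p x = Fcore A p0 τ p x' := by
  unfold Fcore
  by_cases h0 : p.1 = 0
  · rw [if_pos h0, if_pos h0]
    congr 1
    funext q
    exact hagree (0, q.1.1, q.1.2) (Or.inr ⟨h0.symm, q.2⟩)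
  · rw [if_neg h0, if_neg h0]
    have hz : (fun a : ℕ × ℕ => x (0, a.1, a.2)) = fun a => x' (0, a.1, a.2) := by
      funext a
      exact hagree (0, a.1, a.2) (Or.inl (by omega))
    have hres : resSeq (fun i => x (p.1, p.2.1, i)) p.2.2
        = resSeq (fun i => x' (p.1, p.2.1, i)) p.2.2 :=
      resSeq_congr _ fun i hi => hagree (p.1, p.2.1, i) (Or.inr ⟨rfl, Or.inr ⟨rfl, hi⟩⟩)
    rw [hz, hres]
    refine congrFun (Yx_congr _ _ ?_) _
    intro a b hab i
    refine hagree (a + 1, b, i) ?_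
    rcases hab with hab | hab
    · rcases hab with h' | ⟨h', h''⟩
      · refine Or.inl ?_
        show a + 1 < p.1
        omega
      · refine Or.inr ⟨?_, Or.inl ?_⟩
        · show a + 1 = p.1
          omega
        · show b < p.2.1
          omega
    · exfalso
      have := congrArg Prod.snd hab
      simp only at this
      omega

lemma I_direction {A : Set ((ℕ × ℕ × ℕ) → ℕ)} (p0 : ℕ → (ℕ × ℕ) → ℕ)
    {τ : Strat2 ℕ} (hτ : WinStrat2I (CSet A 0 p0) τ) : ∃ σ, WinStrat3I A σ := by
  classical
  refine ⟨fun p hist => Fcore A p0 τ p (fun q => if h : lex3 q p then hist ⟨q, h⟩ else 0), ?_⟩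
  intro x hx
  have hxF : ∀ p : ℕ × ℕ × ℕ, Even p.2.2 → x p = Fcore A p0 τ p x := by
    intro p hp
    rw [hx p hp]
    exact Fcore_congr A p0 τ p (fun q hq => dif_pos hq)
  set z : (ℕ × ℕ) → ℕ := fun a => x (0, a.1, a.2) with hzdef
  have hzC : z ∈ CSet A 0 p0 := by
    apply hτ
    intro pos hpos
    obtain ⟨m, n⟩ := pos
    have h1 : x (0, m, n) = Fcore A p0 τ (0, m, n) x := hxF (0, m, n) hpos
    have h2 : Fcore A p0 τ (0, m, n) x = τ (m, n) (fun q => z q.1) := rfl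
    exact h1.trans h2
  have hW : WinStrat2I {Y | (z, Y) ∈ BSet A 0 p0} (SigAt A 0 p0 z) :=
    SigAt_spec 0 p0 hzC
  set Yv : (ℕ × ℕ) → Baire := Yx (SigAt A 0 p0 z) x with hYv
  have hYc : ∀ pos : ℕ × ℕ, Even pos.2 →
      Yv pos = SigAt A 0 p0 z pos (fun q => Yv q.1) := by
    intro pos hpos
    have hne : ¬ pos.2 % 2 = 1 := by
      have := Nat.even_iff.mp hpos
      omega
    rw [hYv, Yx_eq, if_neg hne]
  have hmem : Cheat Yv ∨ glue 0 p0 z Yv ∈ A := hW Yv hYc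
  have hnocheat : ¬ Cheat Yv := by
    rintro ⟨j, m, i, hne⟩
    apply hne
    have hodd : Yv (j, 2 * m + 1) = fun n => x (j + 1, m, n) := by
      rw [hYv, Yx_eq, if_pos (by omega : (2 * m + 1) % 2 = 1)]
      have : (2 * m + 1) / 2 = m := by omega
      rw [this]
    rw [hodd]
    show x (j + 1, m, 2 * i) = _
    have heven : x (j + 1, m, 2 * i) = Fcore A p0 τ (j + 1, m, 2 * i) x :=
      hxF (j + 1, m, 2 * i) ⟨i, by ring⟩
    rw [heven]
    rfl
  have hglue : glue 0 p0 z Yv ∈ A := hmem.resolve_left hnocheat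
  have hge : glue 0 p0 z Yv = x := by
    funext q
    obtain ⟨j, m, n⟩ := q
    unfold glue
    by_cases h1 : j = 0
    · rw [if_neg (by omega), if_pos h1, h1]
    · rw [if_neg (by omega), if_neg h1]
      have hodd : Yv (j - 0 - 1, 2 * m + 1) = fun i => x ((j - 0 - 1) + 1, m, i) := by
        rw [hYv, Yx_eq, if_pos (by omega : (2 * m + 1) % 2 = 1)]
        have : (2 * m + 1) / 2 = m := by omega
        rw [this]
    /- continue -/
      rw [hodd]
      show x (j - 0 - 1 + 1, m, n) = x (j, m, n)
      have : j - 0 - 1 + 1 = j := by omega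
      rw [this]
  rw [← hge]
  exact hglue

/-! ### Player II's direction -/

open scoped Classical in
/-- A choice of winning strategy for Player II in the auxiliary ℕ-game (if one exists). -/
def TauOf (A : Set ((ℕ × ℕ × ℕ) → ℕ)) (k : ℕ) (P : ℕ → (ℕ × ℕ) → ℕ) : Strat2 ℕ :=
  if h : ∃ τ, WinStrat2II (CSet A k P) τ then h.choose else junkN

lemma TauOf_spec {A : Set ((ℕ × ℕ × ℕ) → ℕ)} {k : ℕ} {P : ℕ → (ℕ × ℕ) → ℕ}
    (h : ∃ τ, WinStrat2II (CSet A k P) τ) :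
    WinStrat2II (CSet A k P) (TauOf A k P) := by
  rw [TauOf, dif_pos h]
  exact h.choose_spec

/-- Player II's ω³-strategy: in superblock `k`, follow the strategy chosen by `TauOf`
for the auxiliary game determined by the previous superblocks. -/
def Gstrat (A : Set ((ℕ × ℕ × ℕ) → ℕ)) : Strat3 ℕ := fun p hist =>
  TauOf A p.1 (fun j a => if h : j < p.1 then hist ⟨(j, a.1, a.2), Or.inl h⟩ else 0)
    (p.2.1, p.2.2) (fun q => hist ⟨(p.1, q.1.1, q.1.2), Or.inr ⟨rfl, q.2⟩⟩)

/-- The sequence of past superblocks of a run. -/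
def Pmask (x : (ℕ × ℕ × ℕ) → ℕ) (k : ℕ) : ℕ → (ℕ × ℕ) → ℕ :=
  fun j a => if _h : j < k then x (j, a.1, a.2) else 0

lemma II_direction {A : Set ((ℕ × ℕ × ℕ) → ℕ)} (hA : IsOpen A)
    (h : ∀ C : Set ((ℕ × ℕ) → ℕ), InGameR2Sigma01 C → Determined2 C)
    (hnI : ¬ ∃ σ, WinStrat2I (CSet A 0 (fun _ _ => 0)) σ) :
    WinStrat3II A (Gstrat A) := by
  intro x hx
  have Inv : ∀ k, ¬ ∃ σ, WinStrat2I (CSet A k (Pmask x k)) σ := by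
    intro k
    induction k with
    | zero =>
      intro hc
      apply hnI
      rwa [CSet_congr (p' := fun _ _ => 0) (fun j hj => absurd hj (Nat.not_lt_zero j))] at hc
    | succ k IH =>
      have hdet := h (CSet A k (Pmask x k)) (CSet_mem_class hA k (Pmask x k))
      have hτex : ∃ τ, WinStrat2II (CSet A k (Pmask x k)) τ := hdet.resolve_left IH
      have hτW := TauOf_spec hτex
      set zk : (ℕ × ℕ) → ℕ := fun a => x (k, a.1, a.2) with hzk
      have hzkcons : ∀ pos : ℕ × ℕ, Odd pos.2 →
          zk pos = TauOf A k (Pmask x k) pos (fun q => zk q.1) := by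
        intro pos hpos
        exact hx (k, pos.1, pos.2) hpos
      have hzknot : zk ∉ CSet A k (Pmask x k) := hτW zk hzkcons
      intro hc
      apply hzknot
      refine L2 A k (Pmask x k) zk ?_
      rwa [CSet_congr (p := Pmask x (k + 1))
        (p' := Function.update (Pmask x k) k zk) ?_] at hc
      intro j hj
      by_cases hjk : j = k
      · subst hjk
        rw [Function.update_self]
        funext a
        rw [Pmask, dif_pos (by omega)]
      · rw [Function.update_of_ne hjk]
        funext a
        rw [Pmask, Pmask, dif_pos (by omega), dif_pos (by omega)]
  intro hxA
  obtain ⟨I, u, hu, hsub⟩ := isOpen_pi_iff.mp hA x hxA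
  set K : ℕ := (I.sup fun q => q.1) + 1 with hK
  apply Inv K
  refine ⟨junkN, ?_⟩
  intro w _
  show GameR2I {y | (w, y) ∈ BSet A K (Pmask x K)}
  refine gameR2I_of_all ?_
  intro Y
  show Cheat Y ∨ glue K (Pmask x K) w Y ∈ A
  right
  apply hsub
  rw [Set.mem_pi]
  intro a ha
  have haK : a.1 < K := by
    have h2 : a.1 ≤ I.sup fun q : ℕ × ℕ × ℕ => q.1 := Finset.le_sup ha
    omega
  have hgx : glue K (Pmask x K) w Y a = x a := by
    unfold glue
    rw [if_pos haK]
    show Pmask x K a.1 (a.2.1, a.2.2) = x a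
    rw [Pmask, dif_pos haK]
  rw [hgx]
  exact (hu a ha).2

end OmegaCubedAux

/-- If all games of length ω² on ℕ with payoff in ⅁ℝ_{ω²}Σ⁰₁ are determined, then all
open games of length ω³ on ℕ are determined. -/
theorem gameClassOmegaSqDet_imp_openOmegaCubedDet
    (h : ∀ C : Set ((ℕ × ℕ) → ℕ), InGameR2Sigma01 C → Determined2 C) :
    ∀ A : Set ((ℕ × ℕ × ℕ) → ℕ), IsOpen A → Determined3 A := by
  intro A hA
  by_cases hI : ∃ σ, WinStrat2I (OmegaCubedAux.CSet A 0 (fun _ _ => 0)) σ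
  · left
    obtain ⟨τ, hτ⟩ := hI
    exact OmegaCubedAux.I_direction (fun _ _ => 0) hτ
  · right
    exact ⟨OmegaCubedAux.Gstrat A, OmegaCubedAux.II_direction hA h hI⟩

end
end
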